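/- Let K be a number field in which infinitely many rational primes are unramified (which always holds). Then, given that the group of roots of unity μ of K is finite, there exists a rational prime power product p ∈ ℤ_{>0} lying in any fixed complement Γ of μ in K* (i.e. K* = μ × Γ) that can be extended to a ℤ-basis of the free abelian group Γ. -/

import Mathlib

open Module NumberField IsDedekindDomain
open scoped nonZeroDivisors

attribute [local instance] FractionRing.liftAlgebra FractionRing.isScalarTower_liftAlgebra


lemma exists_basis_fg {ι M : Type*} [Finite ι] [AddCommGroup M]
    (b : Basis ι ℤ M) (u : M)
    (hu : ∀ (k : ℤ) (x : M), k • x = u → IsUnit k) :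
    ∃ (c : Basis ι ℤ M) (i : ι), c i = u := by
  classical
  have hu0 : u ≠ 0 := by
    intro h
    have h2 := hu 2 0 (by simp [h])
    rw [Int.isUnit_iff] at h2
    omega
  obtain ⟨n, snf⟩ := (Submodule.span ℤ {u}).smithNormalForm b
  obtain ⟨bM, bN, f, a, hsnf⟩ := snf
  have humem : u ∈ Submodule.span ℤ ({u} : Set M) := Submodule.mem_span_singleton_self u
  have hc : ∀ i : Fin n, ∃ c : ℤ, c • u = ((bN i : Submodule.span ℤ {u}) : M) := fun i =>
    Submodule.mem_span_singleton.mp (bN i).2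
  choose c hcspec using hc
  have hc0 : ∀ i, c i ≠ 0 := by
    intro i hci
    apply bN.ne_zero i
    apply Subtype.ext
    rw [← hcspec i, hci, zero_smul]
    rfl
  have hn1 : n = 1 := by
    rcases Nat.lt_or_ge n 1 with h | h
    · exfalso
      interval_cases n
      have h0 := bN.sum_repr ⟨u, humem⟩
      simp only [Finset.univ_eq_empty, Finset.sum_empty] at h0
      exact hu0 (by simpa using congrArg Subtype.val h0.symm)
    rcases Nat.lt_or_ge n 2 with h' | h'
    · omega
    exfalso
    set i0 : Fin n := ⟨0, by omega⟩ with hi0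
    set i1 : Fin n := ⟨1, by omega⟩ with hi1
    have hne : i0 ≠ i1 := by simp [hi0, hi1, Fin.ext_iff]
    have heq : c i1 • bN i0 = c i0 • bN i1 := by
      apply Subtype.ext
      simp only [SetLike.val_smul]
      rw [← hcspec i0, ← hcspec i1, smul_comm]
    have h00 := congrArg (fun z => bN.repr z i0) heq
    simp only [map_smul, Finsupp.smul_apply, Basis.repr_self, smul_eq_mul,
      Finsupp.single_eq_same, mul_one] at h00
    rw [Finsupp.single_eq_of_ne' (Ne.symm hne), mul_zero] at h00
    exact hc0 i1 h00
  subst hn1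
  have hrepr : (bN.repr ⟨u, humem⟩ 0) • bN 0 = ⟨u, humem⟩ := by
    have := bN.sum_repr ⟨u, humem⟩
    simpa [Fin.sum_univ_one] using this
  have hcoe : ((bN.repr ⟨u, humem⟩ 0) * a 0) • bM (f 0) = u := by
    have h1 := congrArg Subtype.val hrepr
    simp only [SetLike.val_smul] at h1
    rw [hsnf 0] at h1
    rw [← smul_smul]
    exact h1
  have hunit := hu _ _ hcoe
  refine ⟨bM.unitsSMul (fun i => if i = f 0 then hunit.unit else 1), f 0, ?_⟩
  rw [Basis.unitsSMul_apply, if_pos rfl]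
  simpa [Units.smul_def, hunit.unit_spec] using hcoe

/-- A primitive element of a countable free ℤ-module is part of a basis indexed by a
`Type 0`. -/
lemma exists_basis_of_primitive {M : Type*} [AddCommGroup M]
    [Module.Free ℤ M] [Countable M] (u : M)
    (hu : ∀ (k : ℤ) (x : M), k • x = u → IsUnit k) :
    ∃ (κ : Type) (c : Basis κ ℤ M) (i : κ), c i = u := by
  classical
  set ι := Module.Free.ChooseBasisIndex ℤ M with hι
  set b : Basis ι ℤ M := Module.Free.chooseBasis ℤ M with hb
  set e : M ≃ₗ[ℤ] (ι →₀ ℤ) := b.repr with he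
  set u' : ι →₀ ℤ := e u with hu'def
  have hu' : ∀ (k : ℤ) (x : ι →₀ ℤ), k • x = u' → IsUnit k := by
    intro k x hk
    refine hu k (e.symm x) ?_
    apply e.injective
    rw [map_smul]
    simp [hk, hu'def]
  set S : Set ι := ↑u'.support with hS
  set M₁ : Submodule ℤ (ι →₀ ℤ) := Finsupp.supported ℤ ℤ S with hM₁
  set M₂ : Submodule ℤ (ι →₀ ℤ) := Finsupp.supported ℤ ℤ Sᶜ with hM₂
  have hdisj : Disjoint M₁ M₂ :=
    Finsupp.disjoint_supported_supported disjoint_compl_right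
  have hcod : M₁ ⊔ M₂ = ⊤ := by
    rw [hM₁, hM₂, ← Finsupp.supported_union, Set.union_compl_self, Finsupp.supported_univ]
  have hcompl : IsCompl M₁ M₂ := ⟨hdisj, codisjoint_iff.mpr hcod⟩
  have hu'mem : u' ∈ M₁ := by
    rw [hM₁, Finsupp.mem_supported]
  have hSfin : Finite ↥S := by
    rw [hS]; exact Finite.of_fintype _
  let b₁ : Basis ↥S ℤ M₁ := Basis.ofRepr (Finsupp.supportedEquivFinsupp S)
  let b₂ : Basis ↥(Sᶜ) ℤ M₂ := Basis.ofRepr (Finsupp.supportedEquivFinsupp Sᶜ)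
  have hprim : ∀ (k : ℤ) (x : M₁), k • x = (⟨u', hu'mem⟩ : M₁) → IsUnit k := by
    intro k x hk
    refine hu' k x ?_
    have := congrArg Subtype.val hk
    simpa using this
  obtain ⟨c₁, i₁, hc₁⟩ := exists_basis_fg b₁ (⟨u', hu'mem⟩ : M₁) hprim
  let E : (M₁ × M₂) ≃ₗ[ℤ] (ι →₀ ℤ) := Submodule.prodEquivOfIsCompl M₁ M₂ hcompl
  let cP : Basis (↥S ⊕ ↥(Sᶜ)) ℤ (ι →₀ ℤ) := (c₁.prod b₂).map E
  have hcP : cP (Sum.inl i₁) = u' := by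
    rw [show cP (Sum.inl i₁) = E ((c₁.prod b₂) (Sum.inl i₁)) from rfl]
    have : (c₁.prod b₂) (Sum.inl i₁) = (c₁ i₁, 0) := by
      ext
      · simp [Basis.prod_apply_inl_fst]
      · simp [Basis.prod_apply_inl_snd]
    rw [this]
    rw [Submodule.coe_prodEquivOfIsCompl', hc₁]
    simp
  let cM : Basis (↥S ⊕ ↥(Sᶜ)) ℤ M := cP.map e.symm
  have hcM : cM (Sum.inl i₁) = u := by
    show e.symm (cP (Sum.inl i₁)) = u
    rw [hcP, hu'def]
    exact e.symm_apply_apply u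
  -- reindex to a Type 0
  have : Countable (↥S ⊕ ↥(Sᶜ)) := cM.injective.countable
  obtain ⟨emb⟩ := nonempty_embedding_nat (↥S ⊕ ↥(Sᶜ))
  let eq := Equiv.ofInjective emb emb.injective
  refine ⟨Set.range emb, cM.reindex eq, eq (Sum.inl i₁), ?_⟩
  rw [Basis.reindex_apply, Equiv.symm_apply_apply, hcM]


lemma torsion_finite (K : Type*) [Field K] [NumberField K] :
    Finite (CommGroup.torsion Kˣ) := by
  have hfin : {x : K | IsIntegral ℤ x ∧ ∀ φ : K →+* ℂ, ‖φ x‖ ≤ 1}.Finite :=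
    NumberField.Embeddings.finite_of_norm_le K ℂ 1
  haveI := hfin.to_subtype
  have hmem : ∀ ζ : CommGroup.torsion Kˣ,
      ((ζ : Kˣ) : K) ∈ {x : K | IsIntegral ℤ x ∧ ∀ φ : K →+* ℂ, ‖φ x‖ ≤ 1} := by
    intro ζ
    have hζ : IsOfFinOrder ((ζ : Kˣ)) := ζ.2
    obtain ⟨n, hn, hpow⟩ := isOfFinOrder_iff_pow_eq_one.mp hζ
    have hKpow : ((ζ : Kˣ) : K) ^ n = 1 := by
      rw [← Units.val_pow_eq_pow_val, hpow, Units.val_one]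
    constructor
    · refine ⟨Polynomial.X ^ n - Polynomial.C 1, Polynomial.monic_X_pow_sub_C 1 hn.ne', ?_⟩
      simp [hKpow]
    · intro φ
      have h1 : (φ ((ζ : Kˣ) : K)) ^ n = 1 := by rw [← map_pow, hKpow, map_one]
      have hnorm : ‖φ ((ζ : Kˣ) : K)‖ ^ n = 1 := by rw [← norm_pow, h1, norm_one]
      have h0 : 0 ≤ ‖φ ((ζ : Kˣ) : K)‖ := norm_nonneg _
      rcases (pow_eq_one_iff_cases.mp hnorm) with h | h | h
      · omega
      · exact le_of_eq h
      · nlinarith [h.1]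
  have hinj : Function.Injective
      (fun ζ : CommGroup.torsion Kˣ =>
        (⟨((ζ : Kˣ) : K), hmem ζ⟩ :
          {x : K | IsIntegral ℤ x ∧ ∀ φ : K →+* ℂ, ‖φ x‖ ≤ 1})) := by
    intro x y hxy
    have h1 : ((x : Kˣ) : K) = ((y : Kˣ) : K) := congrArg Subtype.val hxy
    exact Subtype.ext (Units.ext h1)
  exact Finite.of_injective _ hinj



lemma different_ne_bot (K : Type*) [Field K] [NumberField K] :
    differentIdeal ℤ (𝓞 K) ≠ ⊥ := by
  intro h
  have hco := coeIdeal_differentIdeal ℤ ℚ K (𝓞 K)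
  rw [h] at hco
  simp only [FractionalIdeal.coeIdeal_bot] at hco
  exact FractionalIdeal.dual_ne_zero ℤ ℚ
    (one_ne_zero : (1 : FractionalIdeal (𝓞 K)⁰ K) ≠ 0) (inv_eq_zero.mp hco.symm)

lemma exists_valuation_prime (K : Type*) [Field K] [NumberField K] {q r : ℕ}
    (hq : q.Prime) (hr : r.Prime) (hqr : q ≠ r)
    (hgood : ¬ q ∣ Ideal.absNorm (differentIdeal ℤ (𝓞 K))) :
    ∃ P : HeightOneSpectrum (𝓞 K),
      P.valuation K ((q : K)) =
        ((Multiplicative.ofAdd (-1 : ℤ) : Multiplicative ℤ) : WithZero (Multiplicative ℤ)) ∧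
      P.valuation K ((r : K)) = 1 := by
  classical
  have hD : differentIdeal ℤ (𝓞 K) ≠ ⊥ := different_ne_bot K
  have hq0K : (q : 𝓞 K) ≠ 0 := Nat.cast_ne_zero.mpr hq.pos.ne'
  have hr0K : (r : 𝓞 K) ≠ 0 := Nat.cast_ne_zero.mpr hr.pos.ne'
  -- span q is proper
  have hspan_ne_top : Ideal.span {(q : 𝓞 K)} ≠ ⊤ := by
    rw [Ne, Ideal.span_singleton_eq_top]
    intro hunit
    have h1 : IsUnit (Algebra.norm ℤ (q : 𝓞 K)) := hunit.map (Algebra.norm ℤ)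
    rw [show ((q : 𝓞 K)) = algebraMap ℤ (𝓞 K) (q : ℤ) by simp,
      Algebra.norm_algebraMap_of_basis (Module.Free.chooseBasis ℤ (𝓞 K))] at h1
    rw [Int.isUnit_iff] at h1
    have h2 : (2 : ℤ) ≤ (q : ℤ) := by exact_mod_cast hq.two_le
    have h3 : Fintype.card (Module.Free.ChooseBasisIndex ℤ (𝓞 K)) ≠ 0 := by
      rw [← Module.finrank_eq_card_chooseBasisIndex]
      exact Module.finrank_pos.ne'
    have h5 : 1 < (q : ℤ) ^ Fintype.card (Module.Free.ChooseBasisIndex ℤ (𝓞 K)) :=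
      one_lt_pow₀ (by omega) h3
    rcases h1 with h | h <;> omega
  obtain ⟨P₀, hP₀max, hle⟩ := Ideal.exists_le_maximal _ hspan_ne_top
  have hqP : (q : 𝓞 K) ∈ P₀ := hle (Ideal.mem_span_singleton_self _)
  have hPbot : P₀ ≠ ⊥ := by
    rintro rfl
    exact hq0K (by simpa using hqP)
  set P : HeightOneSpectrum (𝓞 K) := ⟨P₀, hP₀max.isPrime, hPbot⟩ with hP
  -- any natural number coprime to q cannot be in P₀
  have hcop : ∀ s : ℕ, ¬ q ∣ s → (s : 𝓞 K) ∈ P₀ → False := by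
    intro s hns hmem
    have hco : IsCoprime (q : ℤ) (s : ℤ) := by
      rw [Int.isCoprime_iff_gcd_eq_one, Int.gcd_natCast_natCast]
      exact (Nat.Prime.coprime_iff_not_dvd hq).mpr hns
    have hco2 : IsCoprime ((q : 𝓞 K)) ((s : 𝓞 K)) := by
      have := hco.map (algebraMap ℤ (𝓞 K))
      simpa using this
    obtain ⟨x, y, hxy⟩ := hco2
    have h1 : (1 : 𝓞 K) ∈ P₀ := by
      rw [← hxy]
      exact Ideal.add_mem _ (Ideal.mul_mem_left _ _ hqP) (Ideal.mul_mem_left _ _ hmem)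
    exact hP₀max.ne_top ((Ideal.eq_top_iff_one _).mpr h1)
  have hrP : (r : 𝓞 K) ∉ P₀ := by
    intro h
    exact hcop r (fun hdvd => hqr ((Nat.prime_dvd_prime_iff_eq hq hr).mp hdvd)) h
  -- q is unramified at P₀ : P₀^2 does not divide (q)
  have h2ndvd : ¬ (P₀ ^ 2 ∣ Ideal.span {(q : 𝓞 K)}) := by
    intro hdvd
    haveI : (Ideal.span {(q : ℤ)}).IsMaximal :=
      PrincipalIdealRing.isMaximal_of_irreducible
        (Int.prime_iff_natAbs_prime.mpr (by simpa using hq)).irreducible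
    have hmap : Ideal.map (algebraMap ℤ (𝓞 K)) (Ideal.span {(q : ℤ)}) =
        Ideal.span {(q : 𝓞 K)} := by
      rw [Ideal.map_span]
      simp
    have hspanZ : (Ideal.span {(q : ℤ)}) ≠ ⊥ := by
      simpa [Ideal.span_singleton_eq_bot] using
        (by exact_mod_cast hq.pos.ne' : ((q : ℤ)) ≠ 0)
    have hD2 := pow_sub_one_dvd_differentIdeal ℤ P₀ 2 hspanZ (by rw [hmap]; exact hdvd)
    rw [pow_one] at hD2
    exact hcop _ hgood ((Ideal.le_of_dvd hD2) (Ideal.absNorm_mem _))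
  -- compute the valuations
  have hvq : P.intValuationDef (q : 𝓞 K) = Multiplicative.ofAdd (-1 : ℤ) := by
    have hne : P.intValuationDef (q : 𝓞 K) ≠ 0 := P.intValuation_ne_zero _ hq0K
    have hle1 : P.intValuationDef (q : 𝓞 K) ≤ Multiplicative.ofAdd (-1 : ℤ) := by
      have := (P.intValuation_le_pow_iff_dvd (q : 𝓞 K) 1).mpr
        (by rw [pow_one]; exact Ideal.dvd_iff_le.mpr (by simpa using hle))
      rw [← P.intValuation_apply]
      simpa [WithZero.exp_eq_coe_ofAdd] using this
    have hnle2 : ¬ P.intValuationDef (q : 𝓞 K) ≤ Multiplicative.ofAdd (-2 : ℤ) := by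
      intro hle2
      refine h2ndvd ((P.intValuation_le_pow_iff_dvd (q : 𝓞 K) 2).mp (by exact_mod_cast hle2))
    obtain ⟨γ, hγ⟩ := WithZero.ne_zero_iff_exists.mp hne
    rw [← hγ] at hle1 hnle2 ⊢
    rw [WithZero.coe_le_coe] at hle1
    rw [WithZero.coe_le_coe] at hnle2
    rw [WithZero.coe_inj]
    have h1 : Multiplicative.toAdd γ ≤ -1 := hle1
    have h2 : ¬ Multiplicative.toAdd γ ≤ -2 := hnle2
    have : Multiplicative.toAdd γ = -1 := by omega
    rw [← this]
    rfl
  have hvr : P.intValuationDef (r : 𝓞 K) = 1 := by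
    refine le_antisymm (P.intValuation_le_one _) (not_lt.mp ?_)
    intro hlt
    exact hrP ((Ideal.span_singleton_le_iff_mem _).mp
      (Ideal.le_of_dvd ((P.intValuation_lt_one_iff_dvd _).mp hlt)))
  refine ⟨P, ?_, ?_⟩
  · rw [show ((q : K)) = algebraMap (𝓞 K) K ((q : 𝓞 K)) by simp]
    rw [P.valuation_of_algebraMap, P.intValuation_apply]
    exact hvq
  · rw [show ((r : K)) = algebraMap (𝓞 K) K ((r : 𝓞 K)) by simp]
    rw [P.valuation_of_algebraMap, P.intValuation_apply]
    exact hvr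

/-- Let `K` be a number field, `μ ⊆ Kˣ` its (finite) group of
roots of unity, and `Γ` a free abelian complement, so that `Kˣ = μ × Γ`.
Then there exists a positive integer `p` which, as an element of `Kˣ`, lies in
`Γ` and can be extended to a ℤ-basis of the free abelian group `Γ`. -/
theorem exists_positive_integer_basis_element
    (K : Type*) [Field K] [NumberField K]
    (Γ : Subgroup Kˣ)
    (hfree : Module.Free ℤ (Additive Γ))
    (hcompl : IsCompl (CommGroup.torsion Kˣ) Γ) :
    ∃ (p : ℕ) (_ : 0 < p) (u : Kˣ) (hu : u ∈ Γ),
      (u : K) = (p : K) ∧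
      ∃ (ι : Type) (bas : Basis ι ℤ (Additive Γ)) (i : ι),
        bas i = Additive.ofMul (⟨u, hu⟩ : Γ) := by
  classical
  haveI htf : Finite (CommGroup.torsion Kˣ) := torsion_finite K
  -- countability
  haveI hcK : Countable K := by
    have bK := Module.finBasis ℚ K
    exact bK.equivFun.injective.countable
  -- decomposition of primes
  have hdec : ∀ qn : ℕ, qn.Prime → ∃ z : CommGroup.torsion Kˣ, ∃ g : Kˣ,
      g ∈ Γ ∧ (((z : Kˣ) * g : Kˣ) : K) = (qn : K) := by
    intro qn hqn
    have hne : ((qn : K)) ≠ 0 := Nat.cast_ne_zero.mpr hqn.pos.ne'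
    have hmem : (Units.mk0 (qn : K) hne) ∈ CommGroup.torsion Kˣ ⊔ Γ := by
      rw [codisjoint_iff.mp hcompl.codisjoint]
      trivial
    obtain ⟨y, hy, g, hg, hyg⟩ := Subgroup.mem_sup.mp hmem
    exact ⟨⟨y, hy⟩, g, hg, by rw [hyg]; rfl⟩
  let f : ℕ → CommGroup.torsion Kˣ := fun qn =>
    if h : ∃ z : CommGroup.torsion Kˣ, ∃ g : Kˣ,
        g ∈ Γ ∧ (((z : Kˣ) * g : Kˣ) : K) = (qn : K) then h.choose else 1
  have hfspec : ∀ qn : ℕ, qn.Prime → ∃ g : Kˣ,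
      g ∈ Γ ∧ (((f qn : Kˣ) * g : Kˣ) : K) = (qn : K) := by
    intro qn hqn
    have hex := hdec qn hqn
    simp only [f, dif_pos hex]
    exact hex.choose_spec
  -- infinitely many good primes
  set a := Ideal.absNorm (differentIdeal ℤ (𝓞 K)) with ha
  have ha0 : a ≠ 0 := by
    rw [ha, Ne, Ideal.absNorm_eq_zero_iff]
    exact different_ne_bot K
  have hinf : {qn : ℕ | qn.Prime ∧ ¬ qn ∣ a}.Infinite := by
    refine Set.Infinite.mono ?_ (Nat.infinite_setOf_prime.diff (Set.finite_Iic a))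
    rintro x ⟨hx1, hx2⟩
    refine ⟨hx1, fun hdvd => hx2 ?_⟩
    exact Set.mem_Iic.mpr (Nat.le_of_dvd (Nat.pos_of_ne_zero ha0) hdvd)
  obtain ⟨q, hqset, r, hrset, hqr, hfeq⟩ :=
    hinf.exists_ne_map_eq_of_mapsTo (Set.mapsTo_univ f _) Set.finite_univ
  obtain ⟨hq, hqa⟩ := hqset
  obtain ⟨hr, hra⟩ := hrset
  obtain ⟨gq, hgqΓ, hgq⟩ := hfspec q hq
  obtain ⟨gr, hgrΓ, hgr⟩ := hfspec r hr
  set z : CommGroup.torsion Kˣ := f q with hz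
  have hzr : f r = z := hfeq.symm
  -- order of the torsion part
  have hzfin : IsOfFinOrder ((z : Kˣ)) := z.2
  set m : ℕ := orderOf ((z : Kˣ)) with hm
  have hm0 : 0 < m := hzfin.orderOf_pos
  have hzm : ((z : Kˣ)) ^ m = 1 := pow_orderOf_eq_one _
  -- the candidate element
  have hq0 : ((q : K)) ≠ 0 := Nat.cast_ne_zero.mpr hq.pos.ne'
  have hr0 : ((r : K)) ≠ 0 := Nat.cast_ne_zero.mpr hr.pos.ne'
  set u : Kˣ := Units.mk0 (q : K) hq0 * (Units.mk0 (r : K) hr0) ^ (m - 1) with hudef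
  have huval : (u : K) = (q : K) * (r : K) ^ (m - 1) := by
    rw [hudef]
    simp
  -- u lies in Γ
  have h1 : (z : Kˣ) * gq = Units.mk0 (q : K) hq0 := by
    apply Units.ext
    rw [hgq]
    rfl
  have h2 : (z : Kˣ) * gr = Units.mk0 (r : K) hr0 := by
    apply Units.ext
    rw [show ((Units.mk0 (r : K) hr0 : Kˣ) : K) = (r : K) from rfl, ← hgr, hzr]
  have hu_eq : u = gq * gr ^ (m - 1) := by
    rw [hudef, ← h1, ← h2, mul_pow, mul_mul_mul_comm, ← pow_succ',
      Nat.sub_add_cancel hm0, hzm, one_mul]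
  have huΓ : u ∈ Γ := by
    rw [hu_eq]
    exact Subgroup.mul_mem _ hgqΓ (Subgroup.pow_mem _ hgrΓ _)
  -- the positive integer
  refine ⟨q * r ^ (m - 1), Nat.mul_pos hq.pos (pow_pos hr.pos _), u, huΓ, by push_cast [huval]; ring, ?_⟩
  -- primitivity
  obtain ⟨P, hvq, hvr⟩ := exists_valuation_prime K hq hr hqr hqa
  have hprim : ∀ (k : ℤ) (x : Additive Γ),
      k • x = Additive.ofMul (⟨u, huΓ⟩ : Γ) → IsUnit k := by
    intro k x hkx
    have hxk : (Additive.toMul x : Γ) ^ k = (⟨u, huΓ⟩ : Γ) := by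
      rw [← toMul_zsmul, hkx]
      rfl
    have hKxk : (((Additive.toMul x : Γ) : Kˣ) : K) ^ k = (u : K) := by
      rw [← Units.val_zpow_eq_zpow_val, ← SubgroupClass.coe_zpow, hxk]
    -- apply the valuation
    have hval : (P.valuation K ((((Additive.toMul x : Γ) : Kˣ) : K))) ^ k
        = ((Multiplicative.ofAdd (-1 : ℤ) : Multiplicative ℤ) : WithZero (Multiplicative ℤ)) := by
      rw [← map_zpow₀ (P.valuation K) ((((Additive.toMul x : Γ) : Kˣ) : K)) k, hKxk, huval, map_mul, map_pow, hvq, hvr, one_pow, mul_one]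
    have hne : P.valuation K ((((Additive.toMul x : Γ) : Kˣ) : K)) ≠ 0 := by
      rw [Valuation.ne_zero_iff]
      exact Units.ne_zero _
    obtain ⟨γ, hγ⟩ := WithZero.ne_zero_iff_exists.mp hne
    rw [← hγ, ← WithZero.coe_zpow, WithZero.coe_inj] at hval
    have ht : k * Multiplicative.toAdd γ = -1 := by
      have := congrArg Multiplicative.toAdd hval
      rw [toAdd_zpow] at this
      simpa [smul_eq_mul] using this
    exact IsUnit.of_mul_eq_one (a := k) (-(Multiplicative.toAdd γ)) (by rw [mul_neg, ht, neg_neg])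
  haveI := hfree
  haveI hcKu : Countable Kˣ := by
    have hinj : Function.Injective (fun w : Kˣ => (w : K)) := fun a b h => Units.ext h
    exact hinj.countable
  haveI : Countable (Additive Γ) := Countable.of_equiv Γ Additive.ofMul
  obtain ⟨κ, c, i, hc⟩ := exists_basis_of_primitive (Additive.ofMul (⟨u, huΓ⟩ : Γ)) hprim
  exact ⟨κ, c, i, hc⟩
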